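/- Let A be a Banach algebra and X a faithful right Banach A-module (for every nonzero x ∈ X there is a ∈ A with x·a ≠ 0). If there exists a bounded A-module map Φ : B(A, X) → X with Φ ∘ Δ = id_X, where Δ(x)(a) = x·a, then there exists a bounded A⁺-module map Φ⁺ : B(A⁺, X) → X with Φ⁺ ∘ Δ⁺ = id_X and ‖Φ⁺‖ ≤ ‖Φ‖. -/

import Mathlib

variable {A X : Type*}

/-- The multiplication of the unitization `A⁺ = A ⊕₁ ℂ`, realized on `A × ℂ`. -/
def umul [NonUnitalNormedRing A] [NormedSpace ℂ A] (x y : A × ℂ) : A × ℂ :=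
  (x.1 * y.1 + x.2 • y.1 + y.2 • x.1, x.2 * y.2)

/-- The unitization `A⁺` with its ℓ¹-norm `‖a + λe‖ = ‖a‖ + |λ|`. -/
abbrev Aplus (A : Type*) [NonUnitalNormedRing A] := WithLp 1 (A × ℂ)

/-- The inclusion `A → A⁺`, `a ↦ (a, 0)`, as a continuous linear map. -/
noncomputable def iota (A : Type*) [NonUnitalNormedRing A] [NormedSpace ℂ A] : A →L[ℂ] Aplus A :=
  LinearMap.mkContinuous
    { toFun := fun a => (WithLp.equiv 1 (A × ℂ)).symm (a, 0)
      map_add' := fun a b => by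
        apply (WithLp.equiv 1 (A × ℂ)).injective
        simp [Prod.ext_iff]
      map_smul' := fun c a => by
        apply (WithLp.equiv 1 (A × ℂ)).injective
        simp [Prod.ext_iff] } 1
    (fun a => by
      rw [WithLp.prod_norm_eq_add (p := 1) (by norm_num)]
      simp)

lemma iota_norm_le (A : Type*) [NonUnitalNormedRing A] [NormedSpace ℂ A] :
    ‖iota A‖ ≤ 1 :=
  LinearMap.mkContinuous_norm_le _ zero_le_one _

/-- if `X` is a faithful right Banach `A`-module and there is a bounded
`A`-module map `Φ : B(A, X) → X` with `Φ ∘ Δ = id`, then there is a bounded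
`A⁺`-module map `Φ⁺ : B(A⁺, X) → X` with `Φ⁺ ∘ Δ⁺ = id` and `‖Φ⁺‖ ≤ ‖Φ‖`. -/
theorem relative_injectivity_unitization
    [NonUnitalNormedRing A] [NormedSpace ℂ A] [IsScalarTower ℂ A A]
    [SMulCommClass ℂ A A] [CompleteSpace A]
    [NormedAddCommGroup X] [NormedSpace ℂ X] [CompleteSpace X]
    (act : X →ₗ[ℂ] A →ₗ[ℂ] X)
    (hassoc : ∀ (x : X) (a b : A), act (act x a) b = act x (a * b))
    (hbound : ∀ (x : X) (a : A), ‖act x a‖ ≤ ‖x‖ * ‖a‖)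
    (hfaithful : ∀ x : X, x ≠ 0 → ∃ a : A, act x a ≠ 0)
    (Φ : (A →L[ℂ] X) →L[ℂ] X)
    -- `Φ` is an `A`-module map for the action `(Ψ·a)(b) = Ψ(ab)` on `B(A,X)`:
    (hΦmod : ∀ (Ψ Ψ' : A →L[ℂ] X) (a : A),
      (∀ b : A, Ψ' b = Ψ (a * b)) → Φ Ψ' = act (Φ Ψ) a)
    -- `Φ ∘ Δ = id_X`, where `Δ(x)(a) = x·a`:
    (hΦΔ : ∀ (x : X) (D : A →L[ℂ] X), (∀ a : A, D a = act x a) → Φ D = x) :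
    ∃ Φp : (Aplus A →L[ℂ] X) →L[ℂ] X,
      ‖Φp‖ ≤ ‖Φ‖ ∧
      -- `Φ⁺` is an `A`-module map (hence `A⁺`-module map) for `(Ψ·a)(u) = Ψ(au)`:
      (∀ (Ψ Ψ' : Aplus A →L[ℂ] X) (a : A),
        (∀ u : Aplus A, Ψ' u =
            Ψ ((WithLp.equiv 1 (A × ℂ)).symm
              (umul (a, 0) (WithLp.equiv 1 (A × ℂ) u)))) →
        Φp Ψ' = act (Φp Ψ) a) ∧
      -- `Φ⁺ ∘ Δ⁺ = id_X`, where `Δ⁺(x)(a + λe) = x·a + λx`: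
      (∀ (x : X) (D : Aplus A →L[ℂ] X),
        (∀ u : Aplus A, D u =
            act x (WithLp.equiv 1 (A × ℂ) u).1 + (WithLp.equiv 1 (A × ℂ) u).2 • x) →
        Φp D = x) := by
  -- Restriction: Ψ ↦ Ψ ∘ ι, then apply Φ.
  set R : (Aplus A →L[ℂ] X) →ₗ[ℂ] X :=
    { toFun := fun Ψ => Φ (Ψ.comp (iota A))
      map_add' := fun Ψ Ψ' => by simp [ContinuousLinearMap.add_comp]
      map_smul' := fun c Ψ => by simp [ContinuousLinearMap.smul_comp] } with hR
  have hbnd : ∀ Ψ : Aplus A →L[ℂ] X, ‖R Ψ‖ ≤ ‖Φ‖ * ‖Ψ‖ := by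
    intro Ψ
    have h1 : ‖Ψ.comp (iota A)‖ ≤ ‖Ψ‖ :=
      (Ψ.opNorm_comp_le _).trans
        (mul_le_of_le_one_right Ψ.opNorm_nonneg (iota_norm_le A))
    exact (Φ.le_opNorm _).trans (mul_le_mul_of_nonneg_left h1 Φ.opNorm_nonneg)
  refine ⟨R.mkContinuous ‖Φ‖ hbnd,
    LinearMap.mkContinuous_norm_le _ Φ.opNorm_nonneg _, ?_, ?_⟩
  · intro Ψ Ψ' a h
    exact hΦmod (Ψ.comp (iota A)) (Ψ'.comp (iota A)) a (fun b => by
      have := h ((WithLp.equiv 1 (A × ℂ)).symm (b, 0))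
      simpa [iota, umul, LinearMap.mkContinuous_apply] using this)
  · intro x D h
    exact hΦΔ x (D.comp (iota A)) (fun a => by
      have := h ((WithLp.equiv 1 (A × ℂ)).symm (a, 0))
      simpa [iota, LinearMap.mkContinuous_apply] using this)
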